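/- For every natural number j, the improper integral ∫₀^∞ sin^{2j+1}(x)/x dx equals (π/2)·(1/2)_j/j!, where (1/2)_j is the Pochhammer symbol. -/

import Mathlib

open Real Filter Polynomial

open Real Filter MeasureTheory Set intervalIntegral
set_option maxHeartbeats 1000000

lemma exp_int {x : ℝ} (hx : 0 < x) : ∫ t in Ioi (0:ℝ), exp (-(t*x)) = 1/x := by
  have := MeasureTheory.integral_comp_mul_right_Ioi (fun u => exp (-u)) 0 hx
  simp only [zero_mul] at this
  rw [show (fun t => exp (-(t*x))) = fun t => (fun u => exp (-u)) (t * x) from rfl, this,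
    integral_exp_neg_Ioi]
  simp [abs_of_pos, hx, one_div, inv_nonneg.mpr hx.le, abs_of_nonneg]

lemma slice_integrable {x : ℝ} (hx : 0 < x) :
    Integrable (fun t : ℝ => Real.sin x * exp (-(t*x))) (volume.restrict (Ioi (0:ℝ))) := by
  have : IntegrableOn (fun t : ℝ => exp (-x * t)) (Ioi 0) := exp_neg_integrableOn_Ioi 0 hx
  exact ((this.congr_fun (fun t _ => by ring_nf) measurableSet_Ioi).const_mul _)

lemma prod_integrable {T : ℝ} (hT : 0 < T) :
    Integrable (Function.uncurry fun x t => Real.sin x * exp (-(t*x)))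
      ((volume.restrict (Ioc (0:ℝ) T)).prod (volume.restrict (Ioi (0:ℝ)))) := by
  rw [MeasureTheory.integrable_prod_iff]
  · constructor
    · filter_upwards [MeasureTheory.ae_restrict_mem measurableSet_Ioc] with x hx
      exact slice_integrable hx.1
    · apply MeasureTheory.Integrable.congr
        (g := fun x => ∫ t in Ioi (0:ℝ), ‖Real.sin x * exp (-(t*x))‖)
        (f := fun x => |Real.sin x| / x)
      · apply Measure.integrableOn_of_bounded (M := 1) (by simp)
        · exact ((Real.measurable_sin.abs).div measurable_id).aestronglyMeasurable
        · filter_upwards [MeasureTheory.ae_restrict_mem measurableSet_Ioc] with x hx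
          rw [Real.norm_eq_abs, abs_div, abs_abs, abs_of_pos hx.1, div_le_one hx.1]
          simpa [abs_of_pos hx.1] using Real.abs_sin_le_abs (x := x)
      · filter_upwards [MeasureTheory.ae_restrict_mem measurableSet_Ioc] with x hx
        simp only [norm_mul, Real.norm_eq_abs, abs_exp]
        rw [MeasureTheory.integral_const_mul, exp_int hx.1]
        ring
  · apply Continuous.aestronglyMeasurable
    exact (Real.continuous_sin.comp continuous_fst).mul
      ((continuous_snd.mul continuous_fst).neg.rexp)
open Real Filter MeasureTheory Set intervalIntegral
set_option maxHeartbeats 1000000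

lemma inner_int (t T : ℝ) :
    ∫ x in (0:ℝ)..T, exp (-(t*x)) * Real.sin x
      = (1 - exp (-(t*T)) * (Real.cos T + t * Real.sin T)) / (1 + t^2) := by
  have h1t : (1:ℝ) + t^2 ≠ 0 := by positivity
  have key : ∀ x : ℝ, HasDerivAt (fun x => -(exp (-(t*x)) * (t * Real.sin x + Real.cos x)) / (1+t^2))
      (exp (-(t*x)) * Real.sin x) x := by
    intro x
    have he : HasDerivAt (fun x : ℝ => exp (-(t*x))) (-t * exp (-(t*x))) x := by
      have := (((hasDerivAt_id x).const_mul t).neg).exp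
      simpa [mul_comm] using this
    have hs : HasDerivAt (fun x : ℝ => t * Real.sin x + Real.cos x)
        (t * Real.cos x - Real.sin x) x := by
      rw [sub_eq_add_neg]; exact ((Real.hasDerivAt_sin x).const_mul t).add (Real.hasDerivAt_cos x)
    have := ((he.mul hs).neg).div_const (1+t^2)
    refine this.congr_deriv ?_
    rw [div_eq_iff h1t]
    ring
  rw [intervalIntegral.integral_eq_sub_of_hasDerivAt (fun x _ => key x) ?_]
  · simp
    ring
  · apply Continuous.intervalIntegrable
    continuity

lemma fubini_step {T : ℝ} (hT : 0 < T) :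
    ∫ x in (0:ℝ)..T, Real.sin x / x
      = ∫ t in Ioi (0:ℝ), (1 - exp (-(t*T)) * (Real.cos T + t * Real.sin T)) / (1 + t^2) := by
  rw [intervalIntegral.integral_of_le hT.le]
  have step1 : ∫ x in Ioc (0:ℝ) T, Real.sin x / x
      = ∫ x in Ioc (0:ℝ) T, ∫ t in Ioi (0:ℝ), Real.sin x * exp (-(t*x)) := by
    apply MeasureTheory.setIntegral_congr_fun measurableSet_Ioc
    intro x hx
    dsimp only
    rw [MeasureTheory.integral_const_mul, exp_int hx.1]
    ring
  rw [step1]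
  rw [MeasureTheory.integral_integral_swap (prod_integrable hT)]
  apply MeasureTheory.setIntegral_congr_fun measurableSet_Ioi
  intro t _
  dsimp only
  rw [← intervalIntegral.integral_of_le hT.le, ← inner_int t T]
  apply intervalIntegral.integral_congr
  intro x _
  dsimp; ring

lemma err_cont (T : ℝ) : Continuous (fun t : ℝ => exp (-(t*T)) * (Real.cos T + t * Real.sin T) / (1+t^2)) := by
  apply Continuous.div
  · exact ((continuous_id.mul continuous_const).neg.rexp).mul
      (continuous_const.add (continuous_id.mul continuous_const))
  · continuity
  · intro t; positivity

lemma err_ptbound (T : ℝ) (t : ℝ) (ht : 0 ≤ t) :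
    ‖exp (-(t*T)) * (Real.cos T + t * Real.sin T) / (1+t^2)‖ ≤ 2 * exp (-(t*T)) := by
  have h1 : (0:ℝ) < 1 + t^2 := by positivity
  rw [Real.norm_eq_abs, abs_div, abs_of_pos h1, div_le_iff₀ h1, abs_mul, abs_exp]
  have h2 : |Real.cos T + t * Real.sin T| ≤ 1 + t := by
    calc |Real.cos T + t * Real.sin T| ≤ |Real.cos T| + |t * Real.sin T| := abs_add_le _ _
    _ ≤ 1 + t := by
        have := Real.abs_cos_le_one T
        have h3 : |t * Real.sin T| ≤ t := by
          rw [abs_mul, abs_of_nonneg ht]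
          exact mul_le_of_le_one_right ht (Real.abs_sin_le_one T)
        linarith
  have h4 : (1:ℝ) + t ≤ 2 * (1 + t^2) := by nlinarith
  have he : (0:ℝ) < exp (-(t*T)) := exp_pos _
  calc exp (-(t*T)) * |Real.cos T + t * Real.sin T| ≤ exp (-(t*T)) * (2 * (1+t^2)) := by
        exact mul_le_mul_of_nonneg_left (le_trans h2 h4) he.le
  _ = 2 * exp (-(t*T)) * (1+t^2) := by ring

lemma err_integrable {T : ℝ} (hT : 0 < T) :
    IntegrableOn (fun t : ℝ => exp (-(t*T)) * (Real.cos T + t * Real.sin T) / (1+t^2)) (Ioi 0) := by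
  apply MeasureTheory.Integrable.mono' (g := fun t => 2 * exp (-(t*T)))
  · exact ((exp_neg_integrableOn_Ioi 0 hT).congr_fun (fun t _ => by ring_nf) measurableSet_Ioi).const_mul 2
  · exact (err_cont T).aestronglyMeasurable.restrict
  · filter_upwards [MeasureTheory.ae_restrict_mem measurableSet_Ioi] with t ht
    exact err_ptbound T t (le_of_lt ht)

lemma err_bound {T : ℝ} (hT : 0 < T) :
    ‖∫ t in Ioi (0:ℝ), exp (-(t*T)) * (Real.cos T + t * Real.sin T) / (1+t^2)‖ ≤ 2 / T := by
  have : ∫ t in Ioi (0:ℝ), 2 * exp (-(t*T)) = 2 / T := by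
    rw [MeasureTheory.integral_const_mul, exp_int hT]; ring
  rw [← this]
  apply MeasureTheory.norm_integral_le_of_norm_le
  · exact ((exp_neg_integrableOn_Ioi 0 hT).congr_fun (fun t _ => by ring_nf) measurableSet_Ioi).const_mul 2
  · filter_upwards [MeasureTheory.ae_restrict_mem measurableSet_Ioi] with t ht
    exact err_ptbound T t (le_of_lt ht)

lemma split_step {T : ℝ} (hT : 0 < T) :
    ∫ x in (0:ℝ)..T, Real.sin x / x
      = π/2 - ∫ t in Ioi (0:ℝ), exp (-(t*T)) * (Real.cos T + t * Real.sin T) / (1+t^2) := by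
  rw [fubini_step hT]
  have h2 : ∫ t in Ioi (0:ℝ), ((1+t^2)⁻¹ - exp (-(t*T)) * (Real.cos T + t * Real.sin T) / (1+t^2))
      = (∫ t in Ioi (0:ℝ), (1+t^2)⁻¹) - ∫ t in Ioi (0:ℝ), exp (-(t*T)) * (Real.cos T + t * Real.sin T) / (1+t^2) :=
    MeasureTheory.integral_sub (integrable_inv_one_add_sq.integrableOn) (err_integrable hT)
  rw [show ∫ t in Ioi (0:ℝ), (1 - exp (-(t*T)) * (Real.cos T + t * Real.sin T)) / (1 + t^2)
      = ∫ t in Ioi (0:ℝ), ((1+t^2)⁻¹ - exp (-(t*T)) * (Real.cos T + t * Real.sin T) / (1+t^2)) from by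
    apply MeasureTheory.integral_congr_ae
    filter_upwards with t
    have : (1:ℝ) + t^2 ≠ 0 := by positivity
    field_simp]
  rw [h2, integral_Ioi_inv_one_add_sq]
  simp

lemma dirichlet : Tendsto (fun T => ∫ x in (0:ℝ)..T, Real.sin x / x) atTop (nhds (π/2)) := by
  have herr : Tendsto (fun T => ∫ t in Ioi (0:ℝ), exp (-(t*T)) * (Real.cos T + t * Real.sin T) / (1+t^2))
      atTop (nhds 0) := by
    apply squeeze_zero_norm'
    · filter_upwards [eventually_gt_atTop (0:ℝ)] with T hT using err_bound hT
    · simpa using tendsto_const_nhds.div_atTop (f := fun T : ℝ => (2:ℝ)) tendsto_id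
  have := tendsto_const_nhds (x := π/2) (f := atTop (α := ℝ)) |>.sub herr
  rw [sub_zero] at this
  apply this.congr'
  filter_upwards [eventually_gt_atTop (0:ℝ)] with T hT
  exact (split_step hT).symm
open Real Filter MeasureTheory Set Finset

noncomputable def aco (j k : ℕ) : ℝ := (-1:ℝ)^k * (Nat.choose (2*j+1) (j+1+k)) / 4^j

lemma aco_zero {j k : ℕ} (h : j < k) : aco j k = 0 := by
  unfold aco
  rw [Nat.choose_eq_zero_of_lt (by omega)]
  simp

lemma pasc2 (n m : ℕ) : (n+2).choose (m+2) = n.choose m + 2 * n.choose (m+1) + n.choose (m+2) := by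
  have h2 : (n+1).choose (m+1) = n.choose m + n.choose (m+1) := Nat.choose_succ_succ n m
  have h3 : (n+1).choose (m+2) = n.choose (m+1) + n.choose (m+2) := Nat.choose_succ_succ n (m+1)
  have h1 : (n+2).choose (m+2) = (n+1).choose (m+1) + (n+1).choose (m+2) := Nat.choose_succ_succ (n+1) (m+1)
  omega

lemma aco_rec (j k : ℕ) :
    aco (j+1) (k+1) = aco j (k+1) / 2 - aco j k / 4 - aco j (k+2) / 4 := by
  unfold aco
  have h4 : (4:ℝ)^j ≠ 0 := by positivity
  rw [show (2*(j+1)+1) = (2*j+1)+2 by ring, show (j+1)+1+(k+1) = (j+1+k)+2 by ring, pasc2]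
  rw [show j+1+(k+1) = (j+1+k)+1 by ring, show j+1+(k+2) = (j+1+k)+2 by ring]
  push_cast
  field_simp
  ring

lemma choose_symm_mid (j : ℕ) : Nat.choose (2*j+1) j = Nat.choose (2*j+1) (j+1) := by
  have := Nat.choose_symm (n := 2*j+1) (k := j+1) (by omega)
  rw [show 2*j+1-(j+1) = j by omega] at this
  exact this

lemma aco_rec0 (j : ℕ) : aco (j+1) 0 = aco j 0 / 2 + aco j 0 / 4 - aco j 1 / 4 := by
  unfold aco
  have h4 : (4:ℝ)^j ≠ 0 := by positivity
  rw [show (2*(j+1)+1) = (2*j+1)+2 by ring, show (j+1)+1+0 = j+2 by ring, pasc2]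
  rw [show j+1+0 = j+1 by ring, show j+1+1 = j+2 by ring, ← choose_symm_mid]
  push_cast
  field_simp
  ring

lemma aco_sum (j : ℕ) : ∑ k ∈ range (j+1), aco j k = (Nat.choose (2*j) j : ℝ) / 4^j := by
  have key : ∑ k ∈ range (j+1), ((-1:ℝ)^k * (Nat.choose (2*j+1) (j+1+k))) = Nat.choose (2*j) j := by
    have step : ∀ k : ℕ, ((-1:ℝ)^k * (Nat.choose (2*j) (j+k)) - (-1:ℝ)^(k+1) * (Nat.choose (2*j) (j+(k+1))))
        = (-1:ℝ)^k * (Nat.choose (2*j+1) (j+1+k)) := by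
      intro k
      have hp : Nat.choose (2*j+1) (j+k+1) = Nat.choose (2*j) (j+k) + Nat.choose (2*j) (j+k+1) :=
        Nat.choose_succ_succ (2*j) (j+k)
      rw [show j+1+k = j+k+1 by ring, hp, show j+(k+1) = j+k+1 by ring]
      push_cast
      ring
    calc ∑ k ∈ range (j+1), ((-1:ℝ)^k * (Nat.choose (2*j+1) (j+1+k)))
        = ∑ k ∈ range (j+1), (((-1:ℝ)^k * (Nat.choose (2*j) (j+k))) - ((-1:ℝ)^(k+1) * (Nat.choose (2*j) (j+(k+1))))) :=
          Finset.sum_congr rfl (fun k _ => (step k).symm)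
      _ = (-1:ℝ)^0 * (Nat.choose (2*j) (j+0)) - (-1:ℝ)^(j+1) * (Nat.choose (2*j) (j+(j+1))) :=
          Finset.sum_range_sub' (fun k => (-1:ℝ)^k * (Nat.choose (2*j) (j+k))) (j+1)
      _ = Nat.choose (2*j) j := by
          rw [show ((2*j).choose (j+(j+1))) = 0 from Nat.choose_eq_zero_of_lt (by omega)]
          simp
  unfold aco
  rw [← Finset.sum_div, key]

lemma poch_eq (j : ℕ) :
    (Polynomial.eval (1/2 : ℝ) (ascPochhammer ℝ j)) / (Nat.factorial j) = (Nat.choose (2*j) j : ℝ) / 4^j := by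
  have main : ∀ n : ℕ, (Polynomial.eval (1/2 : ℝ) (ascPochhammer ℝ n)) = (Nat.choose (2*n) n : ℝ) * (Nat.factorial n) / 4^n := by
    intro n
    induction n with
    | zero => simp
    | succ m ih =>
      rw [ascPochhammer_succ_eval, ih]
      have e3n : (2*m+2) * Nat.choose (2*m+1) (m+1) = Nat.choose (2*m+2) (m+1) * (m+1) := by
        conv_lhs => rw [← choose_symm_mid m]
        exact Nat.add_one_mul_choose_eq (2*m+1) m
      have e2n : (2*m+1) * Nat.choose (2*m) m = Nat.choose (2*m+1) (m+1) * (m+1) :=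
        Nat.add_one_mul_choose_eq (2*m) m
      have E3 : ((2*(m+1)).choose (m+1) : ℝ) * ((m:ℝ)+1) = (2*(m:ℝ)+2) * ((2*m+1).choose (m+1)) := by
        rw [show 2*(m+1) = 2*m+2 by ring]
        exact_mod_cast e3n.symm
      have E2 : ((2*m+1).choose (m+1) : ℝ) * ((m:ℝ)+1) = (2*(m:ℝ)+1) * ((2*m).choose m) := by
        exact_mod_cast e2n.symm
      have hm1 : ((m:ℝ)+1) ≠ 0 := by positivity
      have h4 : (4:ℝ)^m ≠ 0 := by positivity
      rw [Nat.factorial_succ]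
      push_cast
      rw [div_mul_eq_mul_div, div_eq_div_iff h4 (by positivity)]
      linear_combination (-((4:ℝ)^m*(Nat.factorial m:ℝ))) * E3 + (-(2*(4:ℝ)^m*(Nat.factorial m:ℝ))) * E2
  rw [main j]
  have hf : (Nat.factorial j : ℝ) ≠ 0 := by exact_mod_cast Nat.factorial_ne_zero j
  field_simp
open Real Filter MeasureTheory Set Finset

lemma trig_step (c x : ℝ) :
    Real.sin (c*x) * Real.sin x ^ 2
      = Real.sin (c*x) / 2 - Real.sin ((c+2)*x) / 4 - Real.sin ((c-2)*x) / 4 := by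
  rw [show (c+2)*x = c*x + 2*x by ring, show (c-2)*x = c*x - 2*x by ring,
    Real.sin_add, Real.sin_sub, Real.cos_two_mul, Real.sin_two_mul]
  linear_combination (Real.sin_sq_add_cos_sq x) * Real.sin (c*x)

lemma sin_odd_pow (j : ℕ) (x : ℝ) :
    Real.sin x ^ (2*j+1) = ∑ k ∈ range (j+1), aco j k * Real.sin ((2*(k:ℝ)+1) * x) := by
  induction j with
  | zero =>
    simp [aco]
  | succ j ih =>
    have expand : Real.sin x ^ (2*(j+1)+1) = (Real.sin x ^ (2*j+1)) * Real.sin x ^ 2 := by ring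
    rw [expand, ih, Finset.sum_mul]
    -- per-term expansion
    have hterm : ∀ k ∈ range (j+1),
        aco j k * Real.sin ((2*(k:ℝ)+1) * x) * Real.sin x ^ 2
          = aco j k / 2 * Real.sin ((2*(k:ℝ)+1) * x)
            - aco j k / 4 * Real.sin ((2*(k:ℝ)+3) * x)
            - aco j k / 4 * Real.sin ((2*(k:ℝ)-1) * x) := by
      intro k _
      have := trig_step (2*(k:ℝ)+1) x
      rw [show (2*(k:ℝ)+1)+2 = 2*(k:ℝ)+3 by ring, show (2*(k:ℝ)+1)-2 = 2*(k:ℝ)-1 by ring] at this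
      rw [mul_assoc, this]
      ring
    rw [Finset.sum_congr rfl hterm]
    rw [Finset.sum_sub_distrib, Finset.sum_sub_distrib]
    -- name the pieces
    set s : ℝ → ℝ := fun r => Real.sin (r * x) with hs
    -- T1 split
    have hT1 : ∑ k ∈ range (j+1), aco j k / 2 * s (2*(k:ℝ)+1)
        = aco j 0 / 2 * s 1 + ∑ k ∈ range j, aco j (k+1) / 2 * s (2*(k:ℝ)+3) := by
      rw [Finset.sum_range_succ' (fun k => aco j k / 2 * s (2*(k:ℝ)+1)) j]
      rw [add_comm]
      congr 1
      · push_cast; norm_num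
      · apply Finset.sum_congr rfl
        intro k _
        push_cast
        ring_nf
    -- T3 split
    have hT3 : ∑ k ∈ range (j+1), aco j k / 4 * s (2*(k:ℝ)-1)
        = (- (aco j 0 / 4 * s 1)) + ∑ k ∈ range j, aco j (k+1) / 4 * s (2*(k:ℝ)+1) := by
      rw [Finset.sum_range_succ' (fun k => aco j k / 4 * s (2*(k:ℝ)-1)) j]
      rw [add_comm]
      congr 1
      · simp only [Nat.cast_zero, hs]
        rw [show (2*(0:ℝ)-1) * x = -(1*x) by ring, Real.sin_neg]
        ring
      · apply Finset.sum_congr rfl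
        intro k _
        push_cast
        ring_nf
    -- RHS split
    have hRHS : ∑ k ∈ range (j+2), aco (j+1) k * s (2*(k:ℝ)+1)
        = aco (j+1) 0 * s 1 + ∑ k ∈ range (j+1), aco (j+1) (k+1) * s (2*(k:ℝ)+3) := by
      rw [Finset.sum_range_succ' (fun k => aco (j+1) k * s (2*(k:ℝ)+1)) (j+1)]
      rw [add_comm]
      congr 1
      · push_cast; norm_num
      · apply Finset.sum_congr rfl
        intro k _
        push_cast
        ring_nf
    rw [hT1, hT3, hRHS]
    -- use the recurrence on RHS inner sum
    have hrec : ∑ k ∈ range (j+1), aco (j+1) (k+1) * s (2*(k:ℝ)+3)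
        = ∑ k ∈ range (j+1), (aco j (k+1) / 2 - aco j k / 4 - aco j (k+2) / 4) * s (2*(k:ℝ)+3) := by
      exact Finset.sum_congr rfl (fun k _ => by rw [aco_rec])
    rw [hrec, aco_rec0]
    -- compare the shifted sums
    have hA : ∑ k ∈ range (j+1), aco j (k+1) / 2 * s (2*(k:ℝ)+3)
        = ∑ k ∈ range j, aco j (k+1) / 2 * s (2*(k:ℝ)+3) := by
      rw [Finset.sum_range_succ, aco_zero (by omega)]
      simp
    have hB : ∑ k ∈ range (j+1), aco j (k+2) / 4 * s (2*(k:ℝ)+3)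
        = ∑ k ∈ range j, aco j (k+1) / 4 * s (2*(k:ℝ)+1) - aco j 1 / 4 * s 1 := by
      have expand2 : ∑ k ∈ range (j+2), aco j (k+1) / 4 * s (2*(k:ℝ)+1)
          = ∑ k ∈ range (j+1), aco j (k+2) / 4 * s (2*(k:ℝ)+3) + aco j 1 / 4 * s 1 := by
        rw [Finset.sum_range_succ' (fun k => aco j (k+1) / 4 * s (2*(k:ℝ)+1)) (j+1)]
        congr 1
        · apply Finset.sum_congr rfl
          intro k _
          push_cast
          ring_nf
        · push_cast; norm_num
      have expand3 : ∑ k ∈ range (j+2), aco j (k+1) / 4 * s (2*(k:ℝ)+1)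
          = ∑ k ∈ range j, aco j (k+1) / 4 * s (2*(k:ℝ)+1) := by
        rw [Finset.sum_range_succ, Finset.sum_range_succ, aco_zero (j := j) (by omega),
          aco_zero (j := j) (by omega)]
        simp
      rw [expand3] at expand2
      linarith [expand2]
    have hsum : ∑ k ∈ range (j+1), (aco j (k+1) / 2 - aco j k / 4 - aco j (k+2) / 4) * s (2*(k:ℝ)+3)
        = ∑ k ∈ range (j+1), aco j (k+1) / 2 * s (2*(k:ℝ)+3)
          - ∑ k ∈ range (j+1), aco j k / 4 * s (2*(k:ℝ)+3)
          - ∑ k ∈ range (j+1), aco j (k+2) / 4 * s (2*(k:ℝ)+3) := by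
      rw [← Finset.sum_sub_distrib, ← Finset.sum_sub_distrib]
      exact Finset.sum_congr rfl (fun k _ => by ring)
    rw [hsum, hA, hB]
    ring
open Real Filter MeasureTheory Set Finset


lemma scaled_integral {c : ℝ} (T : ℝ) (hc : 0 < c) :
    ∫ x in (0:ℝ)..T, Real.sin (c*x)/x = ∫ u in (0:ℝ)..(c*T), Real.sin u / u := by
  have heq : (fun x : ℝ => Real.sin (c*x)/x) = fun x => c * ((fun u => Real.sin u / u) (c*x)) := by
    funext x
    by_cases hx : x = 0
    · simp [hx]
    · field_simp
  rw [heq, intervalIntegral.integral_const_mul,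
    intervalIntegral.integral_comp_mul_left (fun u => Real.sin u / u) hc.ne',
    mul_zero, smul_eq_mul, ← mul_assoc, mul_inv_cancel₀ hc.ne', one_mul]

lemma dirichlet_scaled {c : ℝ} (hc : 0 < c) :
    Tendsto (fun T => ∫ x in (0:ℝ)..T, Real.sin (c*x)/x) atTop (nhds (π/2)) := by
  have hcomp : Tendsto (fun T : ℝ => c * T) atTop atTop :=
    Tendsto.const_mul_atTop hc tendsto_id
  have := dirichlet.comp hcomp
  apply this.congr
  intro T
  exact (scaled_integral T hc).symm

lemma sin_div_integrable {c : ℝ} {T : ℝ} (hc : 0 < c) (hT : 0 ≤ T) :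
    IntervalIntegrable (fun x => Real.sin (c*x)/x) volume 0 T := by
  rw [intervalIntegrable_iff_integrableOn_Ioc_of_le hT]
  apply Measure.integrableOn_of_bounded (M := c) measure_Ioc_lt_top.ne
  · exact ((Real.measurable_sin.comp (measurable_const_mul c)).div measurable_id).aestronglyMeasurable
  · filter_upwards [MeasureTheory.ae_restrict_mem measurableSet_Ioc] with x hx
    rw [Real.norm_eq_abs, abs_div, abs_of_pos hx.1, div_le_iff₀ hx.1]
    calc |Real.sin (c*x)| ≤ |c*x| := Real.abs_sin_le_abs
    _ = c * x := abs_of_pos (mul_pos hc hx.1)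

theorem stmt_12 (j : ℕ) :
    Tendsto (fun T => ∫ x in (0:ℝ)..T, Real.sin x ^ (2 * j + 1) / x) atTop
      (nhds (Real.pi / 2 * ((ascPochhammer ℝ j).eval (1 / 2) / (Nat.factorial j)))) := by
  have heach : ∀ k : ℕ, Tendsto (fun T => aco j k * ∫ x in (0:ℝ)..T, Real.sin ((2*(k:ℝ)+1)*x)/x)
      atTop (nhds (aco j k * (π/2))) := by
    intro k
    exact (dirichlet_scaled (by positivity)).const_mul _
  have hsumT : Tendsto (fun T => ∑ k ∈ range (j+1), aco j k * ∫ x in (0:ℝ)..T, Real.sin ((2*(k:ℝ)+1)*x)/x)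
      atTop (nhds (∑ k ∈ range (j+1), aco j k * (π/2))) :=
    tendsto_finset_sum _ (fun k _ => heach k)
  have hval : ∑ k ∈ range (j+1), aco j k * (π/2)
      = Real.pi / 2 * ((ascPochhammer ℝ j).eval (1 / 2) / (Nat.factorial j)) := by
    rw [← Finset.sum_mul, aco_sum, poch_eq]
    ring
  rw [← hval]
  apply hsumT.congr'
  filter_upwards [eventually_ge_atTop (0:ℝ)] with T hT
  have hpt : (fun x => Real.sin x ^ (2*j+1) / x)
      = fun x => ∑ k ∈ range (j+1), aco j k * (Real.sin ((2*(k:ℝ)+1)*x) / x) := by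
    funext x
    rw [sin_odd_pow j x, Finset.sum_div]
    exact Finset.sum_congr rfl (fun k _ => by rw [mul_div_assoc])
  rw [hpt, intervalIntegral.integral_finset_sum]
  · exact Finset.sum_congr rfl (fun k _ => by rw [intervalIntegral.integral_const_mul])
  · intro k _
    exact (sin_div_integrable (by positivity) hT).const_mul _
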